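/- Let f: ℝ → ℝ ∪ {+∞} be proper, lower semicontinuous, and convex. If f is strictly convex on the interior of its domain, then f is strictly convex on its whole domain. -/
import Mathlib


open scoped InnerProductSpace

variable {H : Type*} [NormedAddCommGroup H] [InnerProductSpace ℝ H] [CompleteSpace H]

/-- `f` is proper: not identically `⊤` and never `⊥`. -/
def IsProperFn (f : H → EReal) : Prop := (∃ x, f x ≠ ⊤) ∧ ∀ x, f x ≠ ⊥

/-- `f` is convex (as an extended-real-valued function). -/
def IsConvexFn (f : H → EReal) : Prop :=
  ∀ x y : H, ∀ t : ℝ, 0 < t → t < 1 →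
    f ((1 - t) • x + t • y) ≤ ((1 - t : ℝ) : EReal) * f x + ((t : ℝ) : EReal) * f y

/-- `f` is strictly convex on the set `s`. -/
def StrictConvexOnSet (f : H → EReal) (s : Set H) : Prop :=
  ∀ x ∈ s, ∀ y ∈ s, x ≠ y → ∀ t : ℝ, 0 < t → t < 1 →
    f ((1 - t) • x + t • y) < ((1 - t : ℝ) : EReal) * f x + ((t : ℝ) : EReal) * f y

/-- The effective domain of `f`. -/
def domFn (f : H → EReal) : Set H := {x | f x ≠ ⊤}

/-- `f` is strictly convex (on its domain). -/
def IsStrictConvexFn (f : H → EReal) : Prop := StrictConvexOnSet f (domFn f)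

/-- The convex subdifferential of `f` at `x`. -/
def subdiff (f : H → EReal) (x : H) : Set H :=
  {v | ∀ y : H, f x + ((⟪v, y - x⟫_ℝ : ℝ) : EReal) ≤ f y}

/-- The domain of the subdifferential. -/
def domSubdiff (f : H → EReal) : Set H := {x | (subdiff f x).Nonempty}

/-- `f` is almost strictly convex: strictly convex along every line segment in `dom ∂f`. -/
def AlmostStrictlyConvex (f : H → EReal) : Prop :=
  ∀ x₀ x₁ : H, x₀ ≠ x₁ → segment ℝ x₀ x₁ ⊆ domSubdiff f →
    StrictConvexOnSet f (segment ℝ x₀ x₁)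

/-- `∂f` is strictly monotone. -/
def StrictlyMonotoneSubdiff (f : H → EReal) : Prop :=
  ∀ x₀ x₁ v₀ v₁ : H, v₀ ∈ subdiff f x₀ → v₁ ∈ subdiff f x₁ → x₀ ≠ x₁ →
    0 < ⟪v₀ - v₁, x₀ - x₁⟫_ℝ

lemma aux_lt (f : ℝ → EReal) (hp : IsProperFn f) (hc : IsConvexFn f)
    (hs : StrictConvexOnSet f (interior (domFn f)))
    (x y : ℝ) (hx : f x ≠ ⊤) (hy : f y ≠ ⊤) (hxy : x < y)
    (t : ℝ) (ht0 : 0 < t) (ht1 : t < 1) :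
    f ((1 - t) • x + t • y) < ((1 - t : ℝ) : EReal) * f x + ((t : ℝ) : EReal) * f y := by
  have hyx : (0:ℝ) < y - x := sub_pos.2 hxy
  set a := (f x).toReal with ha
  have hfx : ((a : ℝ) : EReal) = f x := EReal.coe_toReal hx (hp.2 x)
  set b := (f y).toReal with hb
  have hfy : ((b : ℝ) : EReal) = f y := EReal.coe_toReal hy (hp.2 y)
  -- generic bound for points of the open segment
  have hbound : ∀ s : ℝ, 0 < s → s < 1 →
      f ((1 - s) * x + s * y) ≤ (((1 - s) * a + s * b : ℝ) : EReal) := by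
    intro s hs0 hs1
    have h := hc x y s hs0 hs1
    rw [← hfx, ← hfy] at h
    simpa [smul_eq_mul, EReal.coe_mul, EReal.coe_add] using h
  have hIoo : Set.Ioo x y ⊆ domFn f := by
    intro q hq
    set s := (q - x) / (y - x) with hsdef
    have hs0 : 0 < s := div_pos (sub_pos.2 hq.1) hyx
    have hs1 : s < 1 := (div_lt_one hyx).2 (by linarith [hq.2])
    have hsm : s * (y - x) = q - x := div_mul_cancel₀ _ hyx.ne'
    have hqe : (1 - s) * x + s * y = q := by linear_combination hsm
    have hle := hbound s hs0 hs1
    rw [hqe] at hle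
    exact ne_top_of_le_ne_top (EReal.coe_ne_top _) hle
  have hIooInt : Set.Ioo x y ⊆ interior (domFn f) := interior_maximal hIoo isOpen_Ioo
  -- the two auxiliary interior points
  set s₁ : ℝ := t / 2 with hs₁
  set s₂ : ℝ := (1 + t) / 2 with hs₂
  have hs₁0 : 0 < s₁ := by positivity
  have hs₁1 : s₁ < 1 := by simp only [hs₁]; linarith
  have hs₂0 : 0 < s₂ := by positivity
  have hs₂1 : s₂ < 1 := by simp only [hs₂]; linarith
  set x' : ℝ := (1 - s₁) * x + s₁ * y with hx'
  set y' : ℝ := (1 - s₂) * x + s₂ * y with hy'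
  have hx'mem : x' ∈ Set.Ioo x y := by
    constructor <;> simp only [hx', hs₁] <;> nlinarith
  have hy'mem : y' ∈ Set.Ioo x y := by
    constructor <;> simp only [hy', hs₂] <;> nlinarith
  have hne : x' ≠ y' := by
    have : y' - x' = (s₂ - s₁) * (y - x) := by ring
    have h2 : (0:ℝ) < s₂ - s₁ := by simp only [hs₁, hs₂]; linarith
    intro h; rw [h] at this; nlinarith
  have hx'dom : f x' ≠ ⊤ := hIoo hx'mem
  have hy'dom : f y' ≠ ⊤ := hIoo hy'mem
  set a' := (f x').toReal with ha'
  have hfx' : ((a' : ℝ) : EReal) = f x' := EReal.coe_toReal hx'dom (hp.2 x')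
  set b' := (f y').toReal with hb'
  have hfy' : ((b' : ℝ) : EReal) = f y' := EReal.coe_toReal hy'dom (hp.2 y')
  have h1 : a' ≤ (1 - s₁) * a + s₁ * b := by
    have := hbound s₁ hs₁0 hs₁1
    rw [← hx', ← hfx'] at this
    exact_mod_cast this
  have h2 : b' ≤ (1 - s₂) * a + s₂ * b := by
    have := hbound s₂ hs₂0 hs₂1
    rw [← hy', ← hfy'] at this
    exact_mod_cast this
  have hstrict := hs x' (hIooInt hx'mem) y' (hIooInt hy'mem) hne t ht0 ht1
  have hz : (1 - t) • x' + t • y' = (1 - t) • x + t • y := by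
    simp only [smul_eq_mul, hx', hy', hs₁, hs₂]; ring
  rw [hz, ← hfx', ← hfy'] at hstrict
  have hstrict' : f ((1 - t) • x + t • y) < (((1 - t) * a' + t * b' : ℝ) : EReal) := by
    simpa [EReal.coe_mul, EReal.coe_add] using hstrict
  refine lt_of_lt_of_le hstrict' ?_
  rw [← hfx, ← hfy]
  have : ((1 - t) * a' + t * b' : ℝ) ≤ ((1 - t) * a + t * b : ℝ) := by
    simp only [hs₁, hs₂] at h1 h2
    nlinarith [mul_le_mul_of_nonneg_left h1 (by linarith : (0:ℝ) ≤ 1 - t),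
      mul_le_mul_of_nonneg_left h2 ht0.le]
  calc (((1 - t) * a' + t * b' : ℝ) : EReal) ≤ (((1 - t) * a + t * b : ℝ) : EReal) := by
        exact_mod_cast this
    _ = ((1 - t : ℝ) : EReal) * (a : EReal) + ((t : ℝ) : EReal) * (b : EReal) := by
        push_cast; ring

theorem stmt4 (f : ℝ → EReal) (hp : IsProperFn f) (hlsc : LowerSemicontinuous f)
    (hc : IsConvexFn f) (hs : StrictConvexOnSet f (interior (domFn f))) :
    IsStrictConvexFn f := by
  intro x hx y hy hxy t ht0 ht1
  rcases lt_trichotomy x y with h | h | h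
  · exact aux_lt f hp hc hs x y hx hy h t ht0 ht1
  · exact absurd h hxy
  · have key := aux_lt f hp hc hs y x hy hx h (1 - t) (by linarith) (by linarith)
    have hpt : (1 - (1 - t)) • y + (1 - t) • x = (1 - t) • x + t • y := by
      simp only [smul_eq_mul]; ring
    rw [hpt] at key
    have : ((1 - (1 - t) : ℝ) : EReal) * f y + ((1 - t : ℝ) : EReal) * f x
        = ((1 - t : ℝ) : EReal) * f x + ((t : ℝ) : EReal) * f y := by
      rw [add_comm]; norm_num
    rwa [this] at key
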